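/- arXiv:1712.04805 — 2 statements merged into one kernel-verified Lean document; each statement's English description precedes it below -/
import Mathlib

section
/- Let n ≥ 2 and let T : ℝⁿ → ℝⁿ be the affine isometry T(x) = A·x + b, where A is an n×n real orthogonal matrix and b ∈ ℝⁿ. Suppose that T maps no proper hypersurface of the standard cubulation of ℝⁿ onto a proper hypersurface. Then for every closed cube K of the standard cubulation of dimension d with 1 ≤ d ≤ n−1, there exist infinitely many points x ∈ K such that T(x) has at least d+1 non-integer coordinates, i.e. T(x) lies in the interior of a cube of the standard cubulation of dimension strictly greater than d. -/
open Finset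

def coordSub {n : ℕ} (S : Finset (Fin n)) : Submodule ℝ (Fin n → ℝ) where
  carrier := {w | ∀ i ∉ S, w i = 0}
  add_mem' := by intro a b ha hb i hi; simp [ha i hi, hb i hi]
  zero_mem' := by intro i hi; rfl
  smul_mem' := by intro r a ha i hi; simp [ha i hi]

lemma mem_coordSub {n : ℕ} {S : Finset (Fin n)} {w : Fin n → ℝ} :
    w ∈ coordSub S ↔ ∀ i ∉ S, w i = 0 := Iff.rfl

lemma coordSub_eq_span {n : ℕ} (S : Finset (Fin n)) :
    coordSub S = Submodule.span ℝ (Set.range fun i : S => Pi.single (i : Fin n) (1:ℝ)) := by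
  apply le_antisymm
  · intro w hw
    have hrepr : w = ∑ i ∈ S, w i • (Pi.single i 1 : Fin n → ℝ) := by
      funext k
      rw [Finset.sum_apply]
      by_cases hk : k ∈ S
      · rw [Finset.sum_eq_single k]
        · simp
        · intro j hj hjk; simp [Pi.single_apply, hjk.symm]
        · intro h; exact absurd hk h
      · rw [hw k hk, Finset.sum_eq_zero]
        intro j hj
        have : k ≠ j := fun h => hk (h ▸ hj)
        simp [Pi.single_apply, this]
    rw [hrepr]
    exact Submodule.sum_mem _ fun i hi =>
      Submodule.smul_mem _ _ (Submodule.subset_span ⟨⟨i, hi⟩, rfl⟩)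
  · rw [Submodule.span_le]
    rintro _ ⟨i, rfl⟩ k hk
    have : k ≠ (i : Fin n) := fun h => hk (h ▸ i.2)
    simp [Pi.single_apply, this]

lemma finrank_coordSub {n : ℕ} (S : Finset (Fin n)) :
    Module.finrank ℝ (coordSub S) = S.card := by
  rw [coordSub_eq_span]
  have hli : LinearIndependent ℝ (fun i : S => (Pi.single (i : Fin n) 1 : Fin n → ℝ)) := by
    have h1 := (Pi.basisFun ℝ (Fin n)).linearIndependent
    have h2 := h1.comp (fun i : S => (i : Fin n)) Subtype.coe_injective
    simpa [Function.comp_def, Pi.basisFun_apply] using h2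
  rw [finrank_span_eq_card hli, Fintype.card_coe]

lemma map_coordSub_eq {n : ℕ} {A : Matrix (Fin n) (Fin n) ℝ}
    (hA : A ∈ Matrix.orthogonalGroup (Fin n) ℝ) {S S' : Finset (Fin n)}
    (hcard : S.card = S'.card)
    (hle : Submodule.map A.mulVecLin (coordSub S) ≤ coordSub S') :
    Submodule.map A.mulVecLin (coordSub S) = coordSub S' := by
  have hA1 : A * star A = 1 := (Matrix.mem_orthogonalGroup_iff _ _).mp hA
  have hA2 : star A * A = 1 := (Matrix.mem_orthogonalGroup_iff' _ _).mp hA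
  let e : (Fin n → ℝ) ≃ₗ[ℝ] (Fin n → ℝ) :=
    LinearEquiv.ofLinear A.mulVecLin (star A).mulVecLin
      (by rw [← Matrix.mulVecLin_mul, hA1, Matrix.mulVecLin_one])
      (by rw [← Matrix.mulVecLin_mul, hA2, Matrix.mulVecLin_one])
  have hmapeq : Submodule.map A.mulVecLin (coordSub S) =
      Submodule.map (e : (Fin n → ℝ) →ₗ[ℝ] (Fin n → ℝ)) (coordSub S) := rfl
  apply Submodule.eq_of_le_of_finrank_le hle
  rw [finrank_coordSub, hmapeq, LinearEquiv.finrank_map_eq, finrank_coordSub, hcard]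

/-- The proper hypersurface `c + span_ℝ {e_i : i ∈ S}` of the standard cubulation of `ℝⁿ`
(for `c ∈ ℤⁿ`): the set of points agreeing with the integer point `c` in every
coordinate outside `S`. -/
def cubHypersurface {n : ℕ} (c : Fin n → ℤ) (S : Finset (Fin n)) : Set (Fin n → ℝ) :=
  {x | ∀ i ∉ S, x i = (c i : ℝ)}

/-- The closed cube of the standard cubulation of `ℝⁿ` with base vertex `c ∈ ℤⁿ` and
spanned coordinate directions `S`; its dimension is `S.card`. -/
def stdCube {n : ℕ} (c : Fin n → ℤ) (S : Finset (Fin n)) : Set (Fin n → ℝ) :=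
  {x | (∀ i ∈ S, (c i : ℝ) ≤ x i ∧ x i ≤ (c i : ℝ) + 1) ∧ ∀ i ∉ S, x i = (c i : ℝ)}

/-- The number of non-integer coordinates of a point of `ℝⁿ`; this is the dimension of
the unique cube of the standard cubulation containing the point in its interior. -/
noncomputable def nonIntCoordCount {n : ℕ} (x : Fin n → ℝ) : ℕ :=
  Nat.card {i : Fin n // ¬∃ m : ℤ, x i = (m : ℝ)}

lemma isClosed_cubHypersurface {n : ℕ} (c : Fin n → ℤ) (S : Finset (Fin n)) :
    IsClosed (cubHypersurface c S) := by
  have h : cubHypersurface c S =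
      ⋂ (i : Fin n) (_ : i ∉ S), {x : Fin n → ℝ | x i = (c i : ℝ)} := by
    ext x; simp [cubHypersurface]
  rw [h]
  exact isClosed_iInter fun i => isClosed_iInter fun _ =>
    isClosed_eq (continuous_apply i) continuous_const

lemma isClosed_stdCube {n : ℕ} (c : Fin n → ℤ) (S : Finset (Fin n)) :
    IsClosed (stdCube c S) := by
  have h : stdCube c S =
      (⋂ (i : Fin n) (_ : i ∈ S),
        ({x : Fin n → ℝ | (c i : ℝ) ≤ x i} ∩ {x : Fin n → ℝ | x i ≤ (c i : ℝ) + 1})) ∩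
      ⋂ (i : Fin n) (_ : i ∉ S), {x : Fin n → ℝ | x i = (c i : ℝ)} := by
    ext x
    simp only [stdCube, Set.mem_setOf_eq, Set.mem_inter_iff, Set.mem_iInter]
  rw [h]
  refine IsClosed.inter ?_ ?_
  · exact isClosed_iInter fun i => isClosed_iInter fun _ =>
      (isClosed_le continuous_const (continuous_apply i)).inter
        (isClosed_le (continuous_apply i) continuous_const)
  · exact isClosed_iInter fun i => isClosed_iInter fun _ =>
      isClosed_eq (continuous_apply i) continuous_const

lemma dist_update_lt {n : ℕ} (x : Fin n → ℝ) (j : Fin n) (v : ℝ) {ε : ℝ} (hε : 0 < ε)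
    (hv : |v - x j| < ε) : dist (Function.update x j v) x < ε := by
  rw [dist_pi_lt_iff hε]
  intro i
  rcases eq_or_ne i j with rfl | h
  · simpa [Real.dist_eq] using hv
  · simpa [Function.update_of_ne h] using hε

lemma exists_perturb {n : ℕ} {c : Fin n → ℤ} {S : Finset (Fin n)} {x : Fin n → ℝ}
    (hx : x ∈ stdCube c S) {j : Fin n} (hj : j ∈ S) {ε : ℝ} (hε : 0 < ε) :
    ∃ t : ℝ, t ≠ 0 ∧ Function.update x j (x j + t) ∈ stdCube c S ∧
      dist (Function.update x j (x j + t)) x < ε := by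
  obtain ⟨h1, h2⟩ := hx.1 j hj
  set t0 : ℝ := min ε 1 / 2 with ht0
  have ht0pos : 0 < t0 := by
    have := lt_min hε one_pos; positivity
  have ht0ε : t0 < ε := by
    have h := min_le_left ε 1
    rw [ht0]; linarith
  have ht0half : t0 ≤ 1 / 2 := by
    have h := min_le_right ε 1
    rw [ht0]; linarith
  have key : ∀ t : ℝ, (c j : ℝ) ≤ x j + t → x j + t ≤ (c j : ℝ) + 1 → |t| < ε →
      t ≠ 0 → ∃ t : ℝ, t ≠ 0 ∧ Function.update x j (x j + t) ∈ stdCube c S ∧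
      dist (Function.update x j (x j + t)) x < ε := by
    intro t hlo hhi habs hne
    refine ⟨t, hne, ⟨?_, ?_⟩, ?_⟩
    · intro i hi
      rcases eq_or_ne i j with rfl | hne'
      · rw [Function.update_self]; exact ⟨hlo, hhi⟩
      · rw [Function.update_of_ne hne']; exact hx.1 i hi
    · intro i hi
      have hne' : i ≠ j := fun h => hi (h ▸ hj)
      rw [Function.update_of_ne hne']; exact hx.2 i hi
    · apply dist_update_lt x j _ hε
      simpa using habs
  by_cases hc : x j ≤ (c j : ℝ) + 1 / 2
  · refine key t0 (by linarith) (by linarith) ?_ (ne_of_gt ht0pos)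
    rw [abs_of_pos ht0pos]; exact ht0ε
  · push_neg at hc
    refine key (-t0) (by linarith) (by linarith) ?_ (by simp [ne_of_gt ht0pos])
    rw [abs_neg, abs_of_pos ht0pos]; exact ht0ε

/-- Let `n ≥ 2` and let `T x = A x + b` be an affine isometry of `ℝⁿ`
(`A` orthogonal) that maps no proper hypersurface of the standard cubulation onto a
proper hypersurface. Then every closed cube `K` of the standard cubulation of dimension
`d` with `1 ≤ d ≤ n - 1` contains infinitely many points `x` such that `T x` has at
least `d + 1` non-integer coordinates, i.e. `T x` lies in the interior of a cube of
dimension strictly greater than `d`. -/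
theorem infinite_points_mapped_to_higher_cubes {n : ℕ} (hn : 2 ≤ n)
    (A : Matrix (Fin n) (Fin n) ℝ) (hA : A ∈ Matrix.orthogonalGroup (Fin n) ℝ)
    (b : Fin n → ℝ) (T : (Fin n → ℝ) → Fin n → ℝ)
    (hT : ∀ x, T x = A.mulVec x + b)
    (hnone : ¬∃ (c : Fin n → ℤ) (S : Finset (Fin n)) (c' : Fin n → ℤ)
        (S' : Finset (Fin n)),
        0 < S.card ∧ S.card < n ∧ 0 < S'.card ∧ S'.card < n ∧
        T '' cubHypersurface c S = cubHypersurface c' S') :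
    ∀ (c : Fin n → ℤ) (S : Finset (Fin n)), 1 ≤ S.card → S.card ≤ n - 1 →
      {x ∈ stdCube c S | S.card + 1 ≤ nonIntCoordCount (T x)}.Infinite := by
  classical
  intro c S hd1 hd2
  by_contra hcon
  rw [Set.not_infinite] at hcon
  set d := S.card with hdd
  have hmvlin : ⇑A.mulVecLin = A.mulVec := funext fun v => Matrix.mulVecLin_apply A v
  have hTcont : Continuous T := by
    have hfun : T = fun x => A.mulVec x + b := funext hT
    rw [hfun, ← hmvlin]
    exact A.mulVecLin.continuous_of_finiteDimensional.add continuous_const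
  set K := stdCube c S with hK
  have hKc : IsClosed K := isClosed_stdCube c S
  have hcK : (fun i => ((c i : ℝ))) ∈ K := by
    refine ⟨fun i _ => ⟨le_refl _, by linarith⟩, fun i _ => rfl⟩
  haveI : Nonempty K := ⟨⟨_, hcK⟩⟩
  haveI : CompleteSpace K := hKc.completeSpace_coe
  set G : Set (Fin n → ℝ) := {x ∈ stdCube c S | d + 1 ≤ nonIntCoordCount (T x)} with hG
  let f : Option ((Fin n → ℤ) × Finset (Fin n)) → Set K := fun p =>
    p.elim (Subtype.val ⁻¹' G)
      (fun q => if q.2.card = d then Subtype.val ⁻¹' (T ⁻¹' cubHypersurface q.1 q.2) else ∅)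
  have hfc : ∀ p, IsClosed (f p) := by
    rintro (_ | ⟨c', S'⟩)
    · exact hcon.isClosed.preimage continuous_subtype_val
    · show IsClosed (if S'.card = d then _ else ∅)
      split
      · exact (((isClosed_cubHypersurface c' S').preimage hTcont).preimage
          continuous_subtype_val)
      · exact isClosed_empty
  have hfu : ⋃ p, f p = Set.univ := by
    ext y
    simp only [Set.mem_univ, iff_true, Set.mem_iUnion]
    by_cases hy : d + 1 ≤ nonIntCoordCount (T y.val)
    · exact ⟨none, ⟨y.2, hy⟩⟩
    · push_neg at hy
      set N : Finset (Fin n) := Finset.univ.filter (fun i => ¬∃ m : ℤ, T y.val i = (m : ℝ))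
        with hN
      have hcount : nonIntCoordCount (T y.val) = N.card := by
        rw [nonIntCoordCount, Nat.card_eq_fintype_card, Fintype.card_subtype]
      have hdn : d ≤ n := by omega
      have hNcard : N.card ≤ d := by omega
      obtain ⟨S', hNS', -, hS'card⟩ :=
        Finset.exists_subsuperset_card_eq (Finset.subset_univ N) hNcard
          (by simpa using hdn)
      set c'' : Fin n → ℤ := fun i => if h : ∃ m : ℤ, T y.val i = (m : ℝ) then h.choose else 0
        with hc''
      refine ⟨some (c'', S'), ?_⟩
      show y ∈ (if S'.card = d then _ else ∅ : Set K)
      rw [if_pos hS'card]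
      intro i hi
      have hiN : i ∉ N := fun h => hi (hNS' h)
      have hex : ∃ m : ℤ, T y.val i = (m : ℝ) := by
        by_contra hne
        exact hiN (Finset.mem_filter.mpr ⟨Finset.mem_univ i, hne⟩)
      have hci : c'' i = hex.choose := by rw [hc'']; exact dif_pos hex
      show T y.val i = ((c'' i : ℤ) : ℝ)
      rw [hci]
      exact hex.choose_spec
  obtain ⟨p, hp⟩ := nonempty_interior_of_iUnion_of_closed hfc hfu
  obtain ⟨x, hx⟩ := hp
  obtain ⟨ε, hε, hball⟩ := Metric.mem_nhds_iff.mp (mem_interior_iff_mem_nhds.mp hx)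
  rcases p with _ | ⟨c', S'⟩
  · -- finite set has nonempty interior: contradiction
    obtain ⟨j, hj⟩ := Finset.card_pos.mp (by omega : 0 < S.card)
    obtain ⟨h1, h2⟩ := x.2.1 j hj
    set a : ℝ := max ((c j : ℝ)) (x.val j - ε / 2) with ha
    set bb : ℝ := min ((c j : ℝ) + 1) (x.val j + ε / 2) with hbb
    have hab : a < bb := by
      rw [ha, hbb, max_lt_iff, lt_min_iff, lt_min_iff]
      refine ⟨⟨by linarith, by linarith⟩, by linarith, by linarith⟩
    have hinj : Set.InjOn (fun v => Function.update x.val j v) (Set.Ioo a bb) := by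
      intro u _ v _ h
      have := congrFun h j
      simpa using this
    have hsub : (fun v => Function.update x.val j v) '' Set.Ioo a bb ⊆ G := by
      rintro _ ⟨v, hv, rfl⟩
      have hvK : Function.update x.val j v ∈ K := by
        constructor
        · intro i hi
          rcases eq_or_ne i j with rfl | hne
          · rw [Function.update_self]
            constructor
            · exact le_trans (le_max_left _ _) hv.1.le
            · exact le_trans hv.2.le (min_le_left _ _)
          · rw [Function.update_of_ne hne]; exact x.2.1 i hi
        · intro i hi
          have hne : i ≠ j := fun h => hi (h ▸ hj)
          rw [Function.update_of_ne hne]; exact x.2.2 i hi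
      have hdist : dist (Function.update x.val j v) x.val < ε := by
        apply dist_update_lt x.val j v hε
        have hva : x.val j - ε / 2 ≤ a := le_max_right _ _
        have hvb : bb ≤ x.val j + ε / 2 := min_le_right _ _
        rw [abs_lt]
        constructor <;> [skip; skip] <;>
          · have := hv.1; have := hv.2; linarith
      have hmem : (⟨_, hvK⟩ : K) ∈ Metric.ball x ε := by
        rw [Metric.mem_ball, Subtype.dist_eq]; exact hdist
      exact hball hmem
    exact (Set.Ioo_infinite hab).image hinj (hcon.subset hsub)
  · by_cases hS'd : S'.card = d
    swap
    · exfalso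
      have hxm : x ∈ f (some (c', S')) := interior_subset hx
      simp only [f, Option.elim, if_neg hS'd] at hxm
      exact hxm
    have hballK : ∀ y : Fin n → ℝ, y ∈ K → dist y x.val < ε →
        ∀ i ∉ S', T y i = (c' i : ℝ) := by
      intro y hy hyd i hi
      have hmem : (⟨y, hy⟩ : K) ∈ Metric.ball x ε := by
        rw [Metric.mem_ball, Subtype.dist_eq]; exact hyd
      have h2 := hball hmem
      simp only [f, Option.elim, if_pos hS'd] at h2
      exact h2 i hi
    have hx0 : ∀ i ∉ S', T x.val i = (c' i : ℝ) := by
      intro i hi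
      exact hballK x.val x.2 (by simpa using hε) i hi
    have hAij : ∀ i ∉ S', ∀ j ∈ S, A i j = 0 := by
      intro i hi j hj
      obtain ⟨t, ht0, hmem, hdist⟩ := exists_perturb x.2 hj hε
      have h1 := hballK _ hmem hdist i hi
      have hupd : Function.update x.val j (x.val j + t)
          = x.val + t • (Pi.single j 1 : Fin n → ℝ) := by
        funext k
        rcases eq_or_ne k j with rfl | h
        · simp
        · simp [Function.update_of_ne h, Pi.single_apply, h]
      rw [hT, hupd, Matrix.mulVec_add, Matrix.mulVec_smul] at h1
      have hx0' := hx0 i hi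
      rw [hT] at hx0'
      simp only [Pi.add_apply, Pi.smul_apply, Matrix.mulVec_single_one,
        Matrix.transpose_apply, smul_eq_mul, Matrix.col_apply] at h1
      simp only [Pi.add_apply] at hx0'
      have hta : t * A i j = 0 := by linarith
      rcases mul_eq_zero.mp hta with h | h
      · exact absurd h ht0
      · exact h
    have hmaple : Submodule.map A.mulVecLin (coordSub S) ≤ coordSub S' := by
      intro w hw
      rw [Submodule.mem_map] at hw
      obtain ⟨u, hu, rfl⟩ := hw
      intro i hi
      show A.mulVecLin u i = 0
      rw [hmvlin]
      show (∑ j, A i j * u j) = 0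
      apply Finset.sum_eq_zero
      intro j _
      by_cases hjS : j ∈ S
      · rw [hAij i hi j hjS, zero_mul]
      · rw [hu j hjS, mul_zero]
    have heqmap := map_coordSub_eq hA (by omega : S.card = S'.card) hmaple
    apply hnone
    refine ⟨c, S, c', S', by omega, by omega, by omega, by omega, ?_⟩
    ext z
    constructor
    · rintro ⟨y, hy, rfl⟩
      intro i hi
      have hy_x : y - x.val ∈ coordSub S := by
        intro k hk
        show y k - x.val k = 0
        rw [hy k hk, x.2.2 k hk, sub_self]
      have hz : A.mulVecLin (y - x.val) ∈ coordSub S' :=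
        hmaple (Submodule.mem_map_of_mem hy_x)
      have hz' : A.mulVec y i - A.mulVec x.val i = 0 := by
        have h := hz i hi
        rw [hmvlin, Matrix.mulVec_sub] at h
        simpa using h
      have hx0' := hx0 i hi
      rw [hT] at hx0' ⊢
      simp only [Pi.add_apply] at hx0' ⊢
      linarith
    · intro hz
      have hz' : z - T x.val ∈ coordSub S' := by
        intro i hi
        show z i - T x.val i = 0
        rw [hz i hi, hx0 i hi, sub_self]
      rw [← heqmap] at hz'
      rw [Submodule.mem_map] at hz'
      obtain ⟨u, hu, huz⟩ := hz'
      refine ⟨x.val + u, ?_, ?_⟩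
      · intro i hi
        show x.val i + u i = (c i : ℝ)
        rw [x.2.2 i hi, hu i hi, add_zero]
      · have huz' : A.mulVec u = z - T x.val := by rw [← hmvlin]; exact huz
        rw [hT, Matrix.mulVec_add, huz', hT]
        abel
end

section
/- Let a, b ∈ ℤ² be linearly independent integer vectors with a₁² + a₂² = b₁² + b₂², and suppose that b is not obtained from a by a signed permutation of coordinates, i.e. b ∉ {(ε₁a₁, ε₂a₂) : ε₁, ε₂ ∈ {±1}} ∪ {(ε₁a₂, ε₂a₁) : ε₁, ε₂ ∈ {±1}}. Then there exists a linear isometry f of Euclidean ℝ² with f(a) = b and f(b) = a; moreover every such f maps the subgroup ℤa + ℤb of ℝ² onto itself and satisfies f(ℤ²) ≠ ℤ². -/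
/-- The integer vector `a ∈ ℤ²` regarded as a point of Euclidean `ℝ²`. -/
noncomputable def intVec (a : Fin 2 → ℤ) : EuclideanSpace ℝ (Fin 2) :=
  WithLp.toLp 2 fun i => (a i : ℝ)

/-- The lattice `ℤu + ℤv`, i.e. the additive subgroup of `ℝ²` generated by `u, v`,
as a subset of `ℝ²`. -/
def latticeSet (u v : EuclideanSpace ℝ (Fin 2)) : Set (EuclideanSpace ℝ (Fin 2)) :=
  {x | ∃ p q : ℤ, x = p • u + q • v}

/-- The integer lattice `ℤ² ⊆ ℝ²`, the vertex set of the standard cubulation. -/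
def intLattice2 : Set (EuclideanSpace ℝ (Fin 2)) :=
  {x | ∀ i, ∃ m : ℤ, x i = (m : ℝ)}

open scoped RealInnerProductSpace

private lemma inner_formula (x y : EuclideanSpace ℝ (Fin 2)) :
    ⟪x, y⟫ = x 0 * y 0 + x 1 * y 1 := by
  simp [PiLp.inner_apply, Fin.sum_univ_two, RCLike.inner_apply, mul_comm]

set_option maxHeartbeats 2000000 in
private lemma signed_perm_aux (a0 a1 b0 b1 m00 m01 m10 m11 : ℤ)
    (h0 : m00*m00 + m01*m01 = 1) (h1 : m10*m10 + m11*m11 = 1)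
    (ho : m00*m10 + m01*m11 = 0)
    (e0 : b0 = a0*m00 + a1*m10) (e1 : b1 = a0*m01 + a1*m11) :
    ∃ ε₁ ε₂ : ℤ, (ε₁ = 1 ∨ ε₁ = -1) ∧ (ε₂ = 1 ∨ ε₂ = -1) ∧
      ((b0 = ε₁ * a0 ∧ b1 = ε₂ * a1) ∨ (b0 = ε₁ * a1 ∧ b1 = ε₂ * a0)) := by
  have hd : (b0 = a0 ∧ b1 = a1) ∨ (b0 = a0 ∧ b1 = -a1) ∨ (b0 = -a0 ∧ b1 = a1) ∨
      (b0 = -a0 ∧ b1 = -a1) ∨ (b0 = a1 ∧ b1 = a0) ∨ (b0 = a1 ∧ b1 = -a0) ∨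
      (b0 = -a1 ∧ b1 = a0) ∨ (b0 = -a1 ∧ b1 = -a0) := by
    have B : ∀ x y : ℤ, x*x + y*y = 1 → -1 ≤ x ∧ x ≤ 1 ∧ -1 ≤ y ∧ y ≤ 1 := by
      intro x y h
      refine ⟨?_, ?_, ?_, ?_⟩ <;>
        nlinarith [sq_nonneg (x+1), sq_nonneg (x-1), sq_nonneg (y+1), sq_nonneg (y-1),
          sq_nonneg x, sq_nonneg y]
    obtain ⟨c1, c2, c3, c4⟩ := B _ _ h0
    obtain ⟨d1, d2, d3, d4⟩ := B _ _ h1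
    interval_cases m00 <;> interval_cases m01 <;> interval_cases m10 <;> interval_cases m11 <;>
      omega
  rcases hd with ⟨x,y⟩|⟨x,y⟩|⟨x,y⟩|⟨x,y⟩|⟨x,y⟩|⟨x,y⟩|⟨x,y⟩|⟨x,y⟩
  · exact ⟨1, 1, Or.inl rfl, Or.inl rfl, Or.inl ⟨by omega, by omega⟩⟩
  · exact ⟨1, -1, Or.inl rfl, Or.inr rfl, Or.inl ⟨by omega, by omega⟩⟩
  · exact ⟨-1, 1, Or.inr rfl, Or.inl rfl, Or.inl ⟨by omega, by omega⟩⟩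
  · exact ⟨-1, -1, Or.inr rfl, Or.inr rfl, Or.inl ⟨by omega, by omega⟩⟩
  · exact ⟨1, 1, Or.inl rfl, Or.inl rfl, Or.inr ⟨by omega, by omega⟩⟩
  · exact ⟨1, -1, Or.inl rfl, Or.inr rfl, Or.inr ⟨by omega, by omega⟩⟩
  · exact ⟨-1, 1, Or.inr rfl, Or.inl rfl, Or.inr ⟨by omega, by omega⟩⟩
  · exact ⟨-1, -1, Or.inr rfl, Or.inr rfl, Or.inr ⟨by omega, by omega⟩⟩

/-- Let `a, b ∈ ℤ²` be linearly independent with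
`a₁² + a₂² = b₁² + b₂²`, and suppose `b` is not obtained from `a` by a signed
permutation of coordinates. Then there is a linear isometry `f` of Euclidean `ℝ²`
exchanging `a` and `b`; moreover every such `f` maps the lattice `ℤa + ℤb` onto itself
and satisfies `f(ℤ²) ≠ ℤ²`. -/
theorem pythagorean_double_isometry (a b : Fin 2 → ℤ)
    (hind : LinearIndependent ℝ ![intVec a, intVec b])
    (hlen : a 0 ^ 2 + a 1 ^ 2 = b 0 ^ 2 + b 1 ^ 2)
    (hdist : ¬∃ ε₁ ε₂ : ℤ, (ε₁ = 1 ∨ ε₁ = -1) ∧ (ε₂ = 1 ∨ ε₂ = -1) ∧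
      ((b 0 = ε₁ * a 0 ∧ b 1 = ε₂ * a 1) ∨ (b 0 = ε₁ * a 1 ∧ b 1 = ε₂ * a 0))) :
    (∃ f : EuclideanSpace ℝ (Fin 2) →ₗᵢ[ℝ] EuclideanSpace ℝ (Fin 2),
        f (intVec a) = intVec b ∧ f (intVec b) = intVec a) ∧
    ∀ f : EuclideanSpace ℝ (Fin 2) →ₗᵢ[ℝ] EuclideanSpace ℝ (Fin 2),
      f (intVec a) = intVec b → f (intVec b) = intVec a →
        f '' latticeSet (intVec a) (intVec b) = latticeSet (intVec a) (intVec b) ∧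
        f '' intLattice2 ≠ intLattice2 := by
  have hlenR : ((a 0 : ℝ)) ^ 2 + (a 1 : ℝ) ^ 2 = (b 0 : ℝ) ^ 2 + (b 1 : ℝ) ^ 2 := by
    exact_mod_cast hlen
  constructor
  · -- existence of the swapping isometry: reflection across `ℝ ∙ (a + b)`
    set u : EuclideanSpace ℝ (Fin 2) := intVec a + intVec b with hu
    set K : Submodule ℝ (EuclideanSpace ℝ (Fin 2)) := ℝ ∙ u with hK
    set f : EuclideanSpace ℝ (Fin 2) →ₗᵢ[ℝ] EuclideanSpace ℝ (Fin 2) :=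
      (Submodule.reflection K).toLinearIsometry with hf
    have hmemK : u ∈ K := Submodule.mem_span_singleton_self u
    have hperp : intVec a - intVec b ∈ Kᗮ := by
      rw [hK, Submodule.mem_orthogonal_singleton_iff_inner_right, inner_formula]
      have h0 : u 0 = (a 0 : ℝ) + (b 0 : ℝ) := by simp [hu, intVec]
      have h1 : u 1 = (a 1 : ℝ) + (b 1 : ℝ) := by simp [hu, intVec]
      have g0 : (intVec a - intVec b) 0 = (a 0 : ℝ) - (b 0 : ℝ) := by simp [intVec]
      have g1 : (intVec a - intVec b) 1 = (a 1 : ℝ) - (b 1 : ℝ) := by simp [intVec]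
      rw [h0, h1, g0, g1]
      linear_combination hlenR
    have hfu : f u = u := Submodule.reflection_mem_subspace_eq_self hmemK
    have hfw : f (intVec a - intVec b) = -(intVec a - intVec b) :=
      Submodule.reflection_mem_subspace_orthogonalComplement_eq_neg hperp
    have hfa : f (intVec a) = intVec b := by
      have hdecomp : intVec a = (1/2 : ℝ) • (u + (intVec a - intVec b)) := by
        rw [hu]; module
      rw [hdecomp, map_smul, map_add, hfu, hfw, hu]
      module
    have hfb : f (intVec b) = intVec a := by
      have hdecomp : intVec b = (1/2 : ℝ) • (u - (intVec a - intVec b)) := by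
        rw [hu]; module
      rw [hdecomp, map_smul, map_sub, hfu, hfw, hu]
      module
    exact ⟨f, hfa, hfb⟩
  · intro f hfa hfb
    constructor
    · -- f maps ℤa + ℤb onto itself
      ext x
      simp only [Set.mem_image, latticeSet, Set.mem_setOf_eq]
      constructor
      · rintro ⟨y, ⟨p, q, rfl⟩, rfl⟩
        refine ⟨q, p, ?_⟩
        rw [map_add, map_zsmul, map_zsmul, hfa, hfb]
        abel
      · rintro ⟨p, q, rfl⟩
        refine ⟨q • intVec a + p • intVec b, ⟨q, p, rfl⟩, ?_⟩
        rw [map_add, map_zsmul, map_zsmul, hfa, hfb]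
        abel
    · -- f does not preserve ℤ²
      intro heq
      set E0 : EuclideanSpace ℝ (Fin 2) := EuclideanSpace.single 0 1 with hE0
      set E1 : EuclideanSpace ℝ (Fin 2) := EuclideanSpace.single 1 1 with hE1
      have hsingle : ∀ j : Fin 2, EuclideanSpace.single j (1 : ℝ) ∈ intLattice2 := by
        intro j i
        rcases eq_or_ne i j with h | h
        · exact ⟨1, by simp [EuclideanSpace.single_apply, h]⟩
        · exact ⟨0, by simp [EuclideanSpace.single_apply, h]⟩
      have hf0 : f E0 ∈ intLattice2 := heq ▸ ⟨E0, hsingle 0, rfl⟩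
      have hf1 : f E1 ∈ intLattice2 := heq ▸ ⟨E1, hsingle 1, rfl⟩
      obtain ⟨m00, h00⟩ := hf0 0
      obtain ⟨m01, h01⟩ := hf0 1
      obtain ⟨m10, h10⟩ := hf1 0
      obtain ⟨m11, h11⟩ := hf1 1
      have hn0 : m00 * m00 + m01 * m01 = 1 := by
        have hr : (m00 : ℝ) * m00 + (m01 : ℝ) * m01 = 1 := by
          rw [← h00, ← h01, ← inner_formula, f.inner_map_map, inner_formula]
          simp [hE0, EuclideanSpace.single_apply]
        exact_mod_cast hr
      have hn1 : m10 * m10 + m11 * m11 = 1 := by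
        have hr : (m10 : ℝ) * m10 + (m11 : ℝ) * m11 = 1 := by
          rw [← h10, ← h11, ← inner_formula, f.inner_map_map, inner_formula]
          simp [hE1, EuclideanSpace.single_apply]
        exact_mod_cast hr
      have hno : m00 * m10 + m01 * m11 = 0 := by
        have hr : (m00 : ℝ) * m10 + (m01 : ℝ) * m11 = 0 := by
          rw [← h00, ← h01, ← h10, ← h11, ← inner_formula, f.inner_map_map, inner_formula]
          simp [hE0, hE1, EuclideanSpace.single_apply]
        exact_mod_cast hr
      have ha : intVec a = (a 0 : ℝ) • E0 + (a 1 : ℝ) • E1 := by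
        ext i; fin_cases i <;> simp [intVec, hE0, hE1, EuclideanSpace.single_apply]
      have hb' : (a 0 : ℝ) • f E0 + (a 1 : ℝ) • f E1 = intVec b := by
        rw [← map_smul, ← map_smul, ← map_add, ← ha, hfa]
      have hb0 : b 0 = a 0 * m00 + a 1 * m10 := by
        have h := congrFun (congrArg WithLp.ofLp hb') 0
        have : (a 0 : ℝ) * m00 + (a 1 : ℝ) * m10 = (b 0 : ℝ) := by
          rw [← h00, ← h10]
          simpa [intVec] using h
        exact_mod_cast this.symm
      have hb1 : b 1 = a 0 * m01 + a 1 * m11 := by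
        have h := congrFun (congrArg WithLp.ofLp hb') 1
        have : (a 0 : ℝ) * m01 + (a 1 : ℝ) * m11 = (b 1 : ℝ) := by
          rw [← h01, ← h11]
          simpa [intVec] using h
        exact_mod_cast this.symm
      exact hdist (signed_perm_aux (a 0) (a 1) (b 0) (b 1) m00 m01 m10 m11 hn0 hn1 hno hb0 hb1)
end
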